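/- The bubble functions solve the critical integral equation: let n ≥ 1, 0 < s < n/2, 0 < σ < n, and set Q(x) = c₀ (1/(1+|x|²))^{(n-2s)/2} with c₀ = (R_{2s,n} I(σ/2) I((n-2s)/2))^{-(n-2s)/(2(n+2s-σ))}. Then Q satisfies Q(x) = ∫_{ℝⁿ} R_{2s,n}/|x-y|^{n-2s} (∫_{ℝⁿ} Q(z)^{(2n-σ)/(n-2s)}/|y-z|^{σ} dz) Q(y)^{(n+2s-σ)/(n-2s)} dy for all x ∈ ℝⁿ. -/

import Mathlib

open MeasureTheory Real

/-- The Riesz potential normalization constant `R_{γ,n} = Γ((n-γ)/2)/(π^{n/2} 2^γ Γ(γ/2))`. -/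
noncomputable def rieszConst (n : ℕ) (γ : ℝ) : ℝ :=
  Real.Gamma (((n : ℝ) - γ) / 2) /
    (Real.pi ^ ((n : ℝ) / 2) * (2 : ℝ) ^ γ * Real.Gamma (γ / 2))

/-- `I(γ) := π^{n/2} Γ((n-2γ)/2)/Γ(n-γ)` for `0 < γ < n/2`. -/
noncomputable def bubbleI (n : ℕ) (γ : ℝ) : ℝ :=
  Real.pi ^ ((n : ℝ) / 2) * Real.Gamma (((n : ℝ) - 2 * γ) / 2) / Real.Gamma ((n : ℝ) - γ)

/-- The standard bubble `Q(x) = c₀ (1/(1+|x|²))^{(n-2s)/2}`, with the normalization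
`c₀ = (R_{2s,n} I(σ/2) I((n-2s)/2))^{-(n-2s)/(2(n+2s-σ))}`. -/
noncomputable def bubbleQ (n : ℕ) (s σ : ℝ) (x : EuclideanSpace ℝ (Fin n)) : ℝ :=
  (rieszConst n (2 * s) * bubbleI n (σ / 2) * bubbleI n (((n : ℝ) - 2 * s) / 2)) ^
      (-(((n : ℝ) - 2 * s) / (2 * ((n : ℝ) + 2 * s - σ)))) *
    (1 / (1 + ‖x‖ ^ 2)) ^ (((n : ℝ) - 2 * s) / 2)


section BubbleAux
open Set

variable {n : ℕ}
local notation "ofr" => ENNReal.ofReal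
local notation "E" => EuclideanSpace ℝ (Fin n)

lemma lintegral_Ioi_mul_left {f : ℝ → ENNReal} (hf : Measurable f) {c : ℝ} (hc : 0 < c) :
    ∫⁻ t in Ioi (0:ℝ), f t = ENNReal.ofReal c * ∫⁻ u in Ioi (0:ℝ), f (c * u) := by
  have hmap : Measure.map (fun u : ℝ => c * u) volume = ENNReal.ofReal |c⁻¹| • volume :=
    Real.map_volume_mul_left hc.ne'
  have h1 : ∫⁻ t in Ioi (0:ℝ), f t ∂(Measure.map (fun u : ℝ => c * u) volume)
      = ∫⁻ u in (fun u : ℝ => c * u) ⁻¹' (Ioi 0), f (c * u) :=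
    setLIntegral_map measurableSet_Ioi hf (measurable_const_mul c)
  have hpre : (fun u : ℝ => c * u) ⁻¹' (Ioi 0) = Ioi 0 := by
    ext u; simp [mul_pos_iff, hc, hc.not_gt, hc.le]
  rw [hpre] at h1
  rw [hmap] at h1
  rw [Measure.restrict_smul, lintegral_smul_measure] at h1
  rw [abs_of_pos (inv_pos.2 hc)] at h1
  rw [← h1, smul_eq_mul, ← mul_assoc, ← ENNReal.ofReal_mul hc.le, mul_inv_cancel₀ hc.ne', ENNReal.ofReal_one,
    one_mul]

lemma lintegral_gamma {p : ℝ} (hp : 0 < p) {A : ℝ} (hA : 0 < A) :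
    ∫⁻ t in Ioi (0:ℝ), ofr (t ^ (p - 1) * exp (-(A * t)))
      = ofr ((1 / A) ^ p * Real.Gamma p) := by
  rw [← integral_rpow_mul_exp_neg_mul_Ioi hp hA]
  rw [ofReal_integral_eq_lintegral_ofReal]
  · have := integrableOn_rpow_mul_exp_neg_mul_rpow (p := 1) (s := p - 1) (by linarith) one_pos hA
    simp only [rpow_one, neg_mul] at this
    exact this
  · filter_upwards [ae_restrict_mem measurableSet_Ioi] with t ht
    have : (0:ℝ) < t := ht
    positivity

lemma lintegral_beta {γ q : ℝ} (hγ : 0 < γ) (hq : γ < q) :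
    ∫⁻ v in Ioi (0:ℝ), ofr (v ^ (γ - 1) * (1 + v) ^ (-q))
      = ofr (Real.Gamma γ * Real.Gamma (q - γ) / Real.Gamma q) := by
  have hq0 : 0 < q := hγ.trans hq
  have hΓq : 0 < Real.Gamma q := Real.Gamma_pos_of_pos hq0
  rw [← ENNReal.mul_right_inj (a := ofr (Real.Gamma q))
    (by simp [hΓq, ENNReal.ofReal_pos]) ENNReal.ofReal_ne_top]
  have step1 : ofr (Real.Gamma q) * ∫⁻ v in Ioi (0:ℝ), ofr (v ^ (γ - 1) * (1 + v) ^ (-q))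
      = ∫⁻ v in Ioi (0:ℝ), ∫⁻ s in Ioi (0:ℝ),
          ofr (v ^ (γ - 1) * (s ^ (q - 1) * exp (-((1 + v) * s)))) := by
    rw [← lintegral_const_mul' _ _ ENNReal.ofReal_ne_top]
    refine setLIntegral_congr_fun measurableSet_Ioi ?_
    intro v hv
    have hv0 : (0:ℝ) < v := hv
    have h1v : (0:ℝ) < 1 + v := by linarith
    have : ∀ s : ℝ, v ^ (γ - 1) * (s ^ (q - 1) * exp (-((1 + v) * s)))
        = v ^ (γ - 1) * (s ^ (q - 1) * exp (-((1 + v) * s))) := fun _ => rfl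
    calc ofr (Real.Gamma q) * ofr (v ^ (γ - 1) * (1 + v) ^ (-q))
        = ofr (v ^ (γ-1)) * ofr ((1 / (1+v)) ^ q * Real.Gamma q) := by
          rw [← ENNReal.ofReal_mul (by positivity), ← ENNReal.ofReal_mul (by positivity)]
          congr 1
          rw [one_div, Real.inv_rpow h1v.le, ← Real.rpow_neg h1v.le]
          ring
      _ = ofr (v ^ (γ-1)) * ∫⁻ s in Ioi (0:ℝ), ofr (s ^ (q - 1) * exp (-((1 + v) * s))) := by
          rw [lintegral_gamma hq0 h1v]
      _ = ∫⁻ s in Ioi (0:ℝ), ofr (v ^ (γ - 1) * (s ^ (q - 1) * exp (-((1 + v) * s)))) := by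
          rw [← lintegral_const_mul' _ _ ENNReal.ofReal_ne_top]
          refine setLIntegral_congr_fun measurableSet_Ioi ?_
          intro s hs
          dsimp only
          rw [← ENNReal.ofReal_mul (by positivity)]
  rw [step1]
  rw [lintegral_lintegral_swap (by fun_prop)]
  have step3 : ∫⁻ s in Ioi (0:ℝ), ∫⁻ v in Ioi (0:ℝ),
      ofr (v ^ (γ - 1) * (s ^ (q - 1) * exp (-((1 + v) * s))))
      = ∫⁻ s in Ioi (0:ℝ), ofr (Real.Gamma γ) * ofr (s ^ (q - γ - 1) * exp (-(1 * s))) := by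
    refine setLIntegral_congr_fun measurableSet_Ioi ?_
    intro s hs
    have hs0 : (0:ℝ) < s := hs
    have hpt : ∀ v : ℝ, v ^ (γ - 1) * (s ^ (q - 1) * exp (-((1 + v) * s)))
        = (s ^ (q - 1) * exp (-s)) * (v ^ (γ - 1) * exp (-(s * v))) := by
      intro v
      have h1 : (1 + v) * s = s + s * v := by ring
      rw [h1, neg_add, Real.exp_add]
      ring
    simp_rw [hpt]
    calc ∫⁻ v in Ioi (0:ℝ), ofr ((s ^ (q - 1) * exp (-s)) * (v ^ (γ - 1) * exp (-(s * v))))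
        = ofr (s ^ (q - 1) * exp (-s)) * ∫⁻ v in Ioi (0:ℝ), ofr (v ^ (γ - 1) * exp (-(s * v))) := by
          rw [← lintegral_const_mul' _ _ ENNReal.ofReal_ne_top]
          refine setLIntegral_congr_fun measurableSet_Ioi ?_
          intro v hv
          have hv0 : (0:ℝ) < v := hv
          dsimp only
          rw [← ENNReal.ofReal_mul (by positivity)]
      _ = ofr (s ^ (q - 1) * exp (-s)) * ofr ((1 / s) ^ γ * Real.Gamma γ) := by
          rw [lintegral_gamma hγ hs0]
      _ = ofr (Real.Gamma γ) * ofr (s ^ (q - γ - 1) * exp (-(1 * s))) := by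
          rw [← ENNReal.ofReal_mul (by positivity), ← ENNReal.ofReal_mul (by positivity)]
          congr 1
          rw [one_div, Real.inv_rpow hs0.le, ← Real.rpow_neg hs0.le, one_mul]
          rw [show q - γ - 1 = (q - 1) + (-γ) by ring, Real.rpow_add hs0]
          ring
  rw [step3, lintegral_const_mul' _ _ ENNReal.ofReal_ne_top,
    lintegral_gamma (by linarith : (0:ℝ) < q - γ) one_pos]
  rw [← ENNReal.ofReal_mul (Real.Gamma_pos_of_pos hγ).le,
    ← ENNReal.ofReal_mul hΓq.le]
  congr 1
  rw [one_div, inv_one, Real.one_rpow, one_mul]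
  field_simp

lemma ts_lemma {q γ c : ℝ} (hγ0 : 0 < γ) (hγq : 2 * γ < q) (hc : 1 ≤ c) :
    ∫⁻ t in Ioi (0:ℝ), ∫⁻ s in Ioi (0:ℝ),
        ofr (t ^ (γ-1) * s ^ (q-γ-1) * exp (-s) *
          ((π / (t+s)) ^ (q/2) * exp (-(t * s / (t+s) * (c-1)))))
      = ofr (π ^ (q/2) * Real.Gamma γ * Real.Gamma (q/2 - γ) * c ^ (-γ)) := by
  have hq0 : 0 < q := by linarith
  have hq2 : 0 < q / 2 := by linarith
  have hc0 : 0 < c := by linarith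
  rw [lintegral_lintegral_swap (by fun_prop)]
  have step_scale : ∀ s ∈ Ioi (0:ℝ), (∫⁻ t in Ioi (0:ℝ),
      ofr (t ^ (γ-1) * s ^ (q-γ-1) * exp (-s) *
          ((π / (t+s)) ^ (q/2) * exp (-(t * s / (t+s) * (c-1))))))
      = ∫⁻ u in Ioi (0:ℝ), ofr ((π ^ (q/2) * (u ^ (γ-1) * (1+u) ^ (-(q/2)))) *
          (s ^ (q/2-1) * exp (-((1 + u * c) / (1 + u) * s)))) := by
    intro s hs
    have hs0 : (0:ℝ) < s := hs
    rw [lintegral_Ioi_mul_left (f := fun t => ofr (t ^ (γ-1) * s ^ (q-γ-1) * exp (-s) *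
          ((π / (t+s)) ^ (q/2) * exp (-(t * s / (t+s) * (c-1)))))) (by fun_prop) hs0]
    rw [← lintegral_const_mul' _ _ ENNReal.ofReal_ne_top]
    refine setLIntegral_congr_fun measurableSet_Ioi ?_
    intro u hu
    have hu0 : (0:ℝ) < u := hu
    dsimp only
    rw [← ENNReal.ofReal_mul hs0.le]
    congr 1
    have h1u : (0:ℝ) < 1 + u := by linarith
    have hsu : s * u + s = s * (1 + u) := by ring
    -- expand all the rpow algebra
    have e1 : (s * u) ^ (γ - 1) = s ^ (γ-1) * u ^ (γ-1) := Real.mul_rpow hs0.le hu0.le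
    have e2 : (π / (s * u + s)) ^ (q/2) = π ^ (q/2) * (1+u) ^ (-(q/2)) * s ^ (-(q/2)) := by
      rw [hsu, div_rpow pi_pos.le (by positivity), Real.mul_rpow hs0.le h1u.le]
      rw [Real.rpow_neg h1u.le, Real.rpow_neg hs0.le, div_eq_mul_inv, mul_inv]
      ring
    have e3 : s * u * s / (s * u + s) * (c - 1) = u * (c-1) / (1+u) * s := by
      rw [hsu]; field_simp
    have e4 : exp (-s) * exp (-(u * (c-1) / (1+u) * s)) = exp (-((1 + u * c) / (1 + u) * s)) := by
      rw [← Real.exp_add]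
      congr 1
      field_simp
      ring
    rw [e1, e2, e3]
    calc s * (s ^ (γ-1) * u ^ (γ-1) * s ^ (q-γ-1) * exp (-s) *
          (π ^ (q/2) * (1+u) ^ (-(q/2)) * s ^ (-(q/2)) * exp (-(u * (c-1) / (1+u) * s))))
        = (π ^ (q/2) * (u ^ (γ-1) * (1+u) ^ (-(q/2)))) *
          ((s * s ^ (γ-1) * s ^ (q-γ-1) * s ^ (-(q/2))) *
            (exp (-s) * exp (-(u * (c-1) / (1+u) * s)))) := by ring
      _ = (π ^ (q/2) * (u ^ (γ-1) * (1+u) ^ (-(q/2)))) *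
          (s ^ (q/2-1) * exp (-((1 + u * c) / (1 + u) * s))) := by
          rw [e4]
          congr 2
          rw [show (s : ℝ) * s ^ (γ-1) * s ^ (q-γ-1) * s ^ (-(q/2))
              = s ^ (1:ℝ) * s ^ (γ-1) * s ^ (q-γ-1) * s ^ (-(q/2)) by rw [Real.rpow_one]]
          rw [← Real.rpow_add hs0, ← Real.rpow_add hs0, ← Real.rpow_add hs0]
          congr 1
          ring
  rw [setLIntegral_congr_fun measurableSet_Ioi step_scale]
  rw [lintegral_lintegral_swap (by fun_prop)]
  -- now inner s integral via gamma
  have step_g : ∀ u ∈ Ioi (0:ℝ), (∫⁻ s in Ioi (0:ℝ),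
      ofr ((π ^ (q/2) * (u ^ (γ-1) * (1+u) ^ (-(q/2)))) *
          (s ^ (q/2-1) * exp (-((1 + u * c) / (1 + u) * s)))))
      = ofr (π ^ (q/2) * Real.Gamma (q/2)) * ofr (u ^ (γ-1) * (1 + u * c) ^ (-(q/2))) := by
    intro u hu
    have hu0 : (0:ℝ) < u := hu
    have h1u : (0:ℝ) < 1 + u := by linarith
    have h1uc : (0:ℝ) < 1 + u * c := by nlinarith
    have hB : (0:ℝ) < (1 + u * c) / (1 + u) := by positivity
    have split : ∀ s' ∈ Ioi (0:ℝ), ofr ((π ^ (q/2) * (u ^ (γ-1) * (1+u) ^ (-(q/2)))) *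
          (s' ^ (q/2-1) * exp (-((1 + u * c) / (1 + u) * s'))))
        = ofr (π ^ (q/2) * (u ^ (γ-1) * (1+u) ^ (-(q/2)))) *
          ofr (s' ^ (q/2-1) * exp (-((1 + u * c) / (1 + u) * s'))) := by
      intro s' _
      exact ENNReal.ofReal_mul (by positivity)
    rw [setLIntegral_congr_fun measurableSet_Ioi split]
    rw [lintegral_const_mul' _ _ ENNReal.ofReal_ne_top, lintegral_gamma hq2 hB]
    rw [← ENNReal.ofReal_mul (by positivity), ← ENNReal.ofReal_mul (by positivity)]
    congr 1
    have h5 : (1+u) ^ (-(q/2)) * (1+u) ^ (q/2) = 1 := by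
      rw [← Real.rpow_add h1u]; simp
    calc π ^ (q/2) * (u ^ (γ-1) * (1+u) ^ (-(q/2))) * ((1 / ((1 + u * c) / (1 + u))) ^ (q/2)
          * Real.Gamma (q/2))
        = π ^ (q/2) * (u ^ (γ-1) * (1+u) ^ (-(q/2))) * (((1 + u) / (1 + u * c)) ^ (q/2)
          * Real.Gamma (q/2)) := by rw [one_div, inv_div]
      _ = π ^ (q/2) * Real.Gamma (q/2) * (u ^ (γ-1) * (1 + u * c) ^ (-(q/2))) := by
          rw [div_rpow h1u.le h1uc.le, Real.rpow_neg h1uc.le, div_eq_mul_inv]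
          calc π ^ (q/2) * (u ^ (γ-1) * (1+u) ^ (-(q/2))) * ((1+u) ^ (q/2) *
                ((1 + u * c) ^ (q/2))⁻¹ * Real.Gamma (q/2))
              = π ^ (q/2) * Real.Gamma (q/2) * (u ^ (γ-1) * (((1+u) ^ (-(q/2)) * (1+u) ^ (q/2)) *
                ((1 + u * c) ^ (q/2))⁻¹)) := by ring
            _ = _ := by rw [h5]; ring
  rw [setLIntegral_congr_fun measurableSet_Ioi step_g]
  rw [lintegral_const_mul' _ _ ENNReal.ofReal_ne_top]
  -- scale u = c⁻¹ * v
  rw [lintegral_Ioi_mul_left (f := fun u => ofr (u ^ (γ-1) * (1 + u * c) ^ (-(q/2))))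
    (by fun_prop) (inv_pos.2 hc0)]
  have step_c : ∀ v ∈ Ioi (0:ℝ), ofr ((c⁻¹ * v) ^ (γ-1) * (1 + c⁻¹ * v * c) ^ (-(q/2)))
      = ofr ((c⁻¹) ^ (γ - 1)) * ofr (v ^ (γ-1) * (1 + v) ^ (-(q/2))) := by
    intro v hv
    have hv0 : (0:ℝ) < v := hv
    rw [← ENNReal.ofReal_mul (by positivity)]
    congr 1
    rw [Real.mul_rpow (by positivity) hv0.le]
    rw [show c⁻¹ * v * c = v by field_simp]
    ring
  rw [setLIntegral_congr_fun measurableSet_Ioi step_c]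
  rw [lintegral_const_mul' _ _ ENNReal.ofReal_ne_top]
  rw [lintegral_beta hγ0 (by linarith : γ < q/2)]
  rw [← ENNReal.ofReal_mul (by positivity), ← ENNReal.ofReal_mul (by positivity),
    ← ENNReal.ofReal_mul (by positivity)]
  congr 1
  have hΓq2 : (0:ℝ) < Real.Gamma (q/2) := Real.Gamma_pos_of_pos hq2
  have ec : (c:ℝ)⁻¹ * (c⁻¹) ^ (γ-1) = c ^ (-γ) := by
    rw [show (c:ℝ)⁻¹ * (c⁻¹) ^ (γ-1) = (c⁻¹) ^ (1:ℝ) * (c⁻¹) ^ (γ-1) from by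
      rw [Real.rpow_one], ← Real.rpow_add (inv_pos.2 hc0), Real.inv_rpow hc0.le,
      ← Real.rpow_neg hc0.le]
    norm_num
  calc π ^ (q/2) * Real.Gamma (q/2) * (c⁻¹ * ((c⁻¹) ^ (γ-1) *
        (Real.Gamma γ * Real.Gamma (q/2 - γ) / Real.Gamma (q/2))))
      = (c⁻¹ * (c⁻¹) ^ (γ-1)) * (π ^ (q/2) * Real.Gamma γ * Real.Gamma (q/2-γ) *
          (Real.Gamma (q/2) / Real.Gamma (q/2))) := by ring
    _ = π ^ (q/2) * Real.Gamma γ * Real.Gamma (q/2 - γ) * c ^ (-γ) := by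
        rw [div_self hΓq2.ne', ec]; ring

lemma gauss_integral (t s : ℝ) (ht : 0 < t) (hs : 0 < s) (x : E) :
    ∫ y : E, exp (-(t * ‖x - y‖ ^ 2 + s * ‖y‖ ^ 2))
      = (π / (t + s)) ^ ((n : ℝ) / 2) * exp (-(t * s / (t + s) * ‖x‖ ^ 2)) := by
  have hts : 0 < t + s := by linarith
  have key : ∀ y : E, t * ‖x - y‖ ^ 2 + s * ‖y‖ ^ 2
      = (t + s) * ‖y - (t / (t + s)) • x‖ ^ 2 + t * s / (t + s) * ‖x‖ ^ 2 := by
    intro y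
    have h1 : ‖x - y‖ ^ 2 = ‖x‖ ^ 2 - 2 * (inner ℝ x y : ℝ) + ‖y‖ ^ 2 := norm_sub_sq_real x y
    have h2 : ‖y - (t / (t + s)) • x‖ ^ 2
        = ‖y‖ ^ 2 - 2 * (t / (t + s) * (inner ℝ y x : ℝ)) + (t / (t+s)) ^ 2 * ‖x‖ ^ 2 := by
      rw [norm_sub_sq_real, real_inner_smul_right, norm_smul]
      rw [mul_pow, Real.norm_eq_abs, sq_abs]
    have h3 : (inner ℝ y x : ℝ) = (inner ℝ x y : ℝ) := real_inner_comm x y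
    rw [h1, h2, h3]
    field_simp
    ring
  have step : ∫ y : E, exp (-(t * ‖x - y‖ ^ 2 + s * ‖y‖ ^ 2))
      = ∫ y : E, exp (-(t * s / (t + s) * ‖x‖ ^ 2)) * exp (-((t+s) * ‖y - (t / (t + s)) • x‖ ^ 2)) := by
    congr 1; funext y; rw [key y, neg_add, Real.exp_add, mul_comm]
  rw [step, integral_const_mul]
  have : ∫ y : E, exp (-((t+s) * ‖y - (t / (t + s)) • x‖ ^ 2))
      = ∫ y : E, exp (-((t+s) * ‖y‖ ^ 2)) := by
    exact integral_sub_right_eq_self (fun y => exp (-((t+s) * ‖y‖ ^ 2))) _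
  rw [this]
  have := GaussianFourier.integral_rexp_neg_mul_sq_norm (V := E) hts
  simp_rw [neg_mul] at this
  rw [this, finrank_euclideanSpace_fin, mul_comm]

lemma integrable_gauss {b : ℝ} (hb : 0 < b) :
    Integrable (fun y : E => rexp (-(b * ‖y‖ ^ 2))) := by
  have h := (GaussianFourier.integrable_cexp_neg_mul_sq_norm_add (V := E) (b := (b : ℂ))
    (by simpa using hb) 0 0).re
  apply h.congr
  filter_upwards with v
  have : -(b : ℂ) * (‖v‖ : ℂ) ^ 2 + 0 * (inner ℝ (0 : E) v : ℝ) = ((-(b * ‖v‖ ^ 2) : ℝ) : ℂ) := by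
    push_cast; ring
  rw [this]
  exact Complex.exp_ofReal_re _

lemma integrable_gauss2 (t s : ℝ) (ht : 0 < t) (hs : 0 < s) (x : E) :
    Integrable (fun y : E => rexp (-(t * ‖x - y‖ ^ 2 + s * ‖y‖ ^ 2))) := by
  apply (integrable_gauss hs).mono'
  · apply (Continuous.neg (by continuity)).rexp.aestronglyMeasurable
  · filter_upwards with y
    rw [Real.norm_eq_abs, abs_of_pos (exp_pos _)]
    apply Real.exp_le_exp.2
    nlinarith [norm_nonneg (x - y), sq_nonneg ‖x - y‖, mul_nonneg ht.le (sq_nonneg ‖x - y‖)]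

lemma lintegral_gauss (t s : ℝ) (ht : 0 < t) (hs : 0 < s) (x : E) :
    ∫⁻ y : E, ofr (exp (-(t * ‖x - y‖ ^ 2 + s * ‖y‖ ^ 2)))
      = ofr ((π / (t + s)) ^ ((n : ℝ) / 2) * exp (-(t * s / (t + s) * ‖x‖ ^ 2))) := by
  rw [← gauss_integral t s ht hs x]
  rw [ofReal_integral_eq_lintegral_ofReal (integrable_gauss2 t s ht hs x)
    (Filter.Eventually.of_forall fun y => (exp_pos _).le)]

lemma key_lintegral (hn : 1 ≤ n) {γ : ℝ} (hγ0 : 0 < γ) (hγn : 2 * γ < n) (x : E) :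
    ∫⁻ y : E, ofr ((1 + ‖y‖ ^ 2) ^ (-((n:ℝ) - γ)) / ‖x - y‖ ^ (2 * γ))
      = ofr (bubbleI n γ * (1 + ‖x‖ ^ 2) ^ (-γ)) := by
  have hq0 : (0:ℝ) < n := by linarith
  have hqγ : γ < (n:ℝ) - γ := by linarith
  have hnγ0 : (0:ℝ) < (n:ℝ) - γ := by linarith
  have hΓ1 : 0 < Real.Gamma γ := Real.Gamma_pos_of_pos hγ0
  have hΓ2 : 0 < Real.Gamma ((n:ℝ) - γ) := Real.Gamma_pos_of_pos hnγ0
  have hc1 : (1:ℝ) ≤ 1 + ‖x‖ ^ 2 := by nlinarith [sq_nonneg ‖x‖]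
  have hc0 : (0:ℝ) < 1 + ‖x‖ ^ 2 := by linarith
  haveI : Nontrivial E := by
    refine nontrivial_of_ne (EuclideanSpace.single ⟨0, hn⟩ (1:ℝ)) 0 fun h => ?_
    have := congr_fun (congrArg (fun v : E => (v : Fin n → ℝ)) h) ⟨0, hn⟩
    simp [EuclideanSpace.single_apply] at this
  have hae : ∀ᵐ y : E, y ≠ x := by
    rw [ae_iff]
    simpa using measure_singleton (α := E) x
  rw [← ENNReal.mul_right_inj (a := ofr (Real.Gamma γ * Real.Gamma ((n:ℝ) - γ)))
    (by simp [ENNReal.ofReal_pos]; positivity) ENNReal.ofReal_ne_top]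
  calc ofr (Real.Gamma γ * Real.Gamma ((n:ℝ) - γ)) *
        ∫⁻ y : E, ofr ((1 + ‖y‖ ^ 2) ^ (-((n:ℝ) - γ)) / ‖x - y‖ ^ (2 * γ))
      = ∫⁻ y : E, (∫⁻ t in Ioi (0:ℝ), ofr (t ^ (γ-1) * exp (-(‖x - y‖ ^ 2 * t)))) *
          (∫⁻ s in Ioi (0:ℝ), ofr (s ^ ((n:ℝ)-γ-1) * exp (-((1 + ‖y‖ ^ 2) * s)))) := by
        rw [← lintegral_const_mul' _ _ ENNReal.ofReal_ne_top]
        refine lintegral_congr_ae ?_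
        filter_upwards [hae] with y hy
        have hxy : (0:ℝ) < ‖x - y‖ := by
          rw [norm_pos_iff]; exact sub_ne_zero_of_ne (Ne.symm hy)
        have hxy2 : (0:ℝ) < ‖x - y‖ ^ 2 := by positivity
        have hb : (0:ℝ) < 1 + ‖y‖ ^ 2 := by nlinarith [sq_nonneg ‖y‖]
        rw [lintegral_gamma hγ0 hxy2, lintegral_gamma hnγ0 hb]
        rw [← ENNReal.ofReal_mul (by positivity), ← ENNReal.ofReal_mul (by positivity)]
        congr 1
        have ha : ((‖x - y‖ ^ 2 : ℝ)) ^ γ = ‖x - y‖ ^ (2 * γ) := by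
          rw [← Real.rpow_natCast ‖x - y‖ 2, ← Real.rpow_mul (norm_nonneg _)]
          norm_num
        rw [one_div, one_div, Real.inv_rpow hxy2.le, Real.inv_rpow hb.le,
          ← Real.rpow_neg hb.le, ha, div_eq_mul_inv]
        ring
    _ = ∫⁻ y : E, ∫⁻ t in Ioi (0:ℝ), ∫⁻ s in Ioi (0:ℝ),
          ofr (t ^ (γ-1) * exp (-(‖x - y‖ ^ 2 * t))) *
          ofr (s ^ ((n:ℝ)-γ-1) * exp (-((1 + ‖y‖ ^ 2) * s))) := by
        refine lintegral_congr fun y => ?_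
        rw [← lintegral_mul_const'' _ (by fun_prop)]
        refine setLIntegral_congr_fun measurableSet_Ioi ?_
        intro t ht
        dsimp only
        rw [lintegral_const_mul' _ _ ENNReal.ofReal_ne_top]
    _ = ∫⁻ t in Ioi (0:ℝ), ∫⁻ y : E, ∫⁻ s in Ioi (0:ℝ),
          ofr (t ^ (γ-1) * exp (-(‖x - y‖ ^ 2 * t))) *
          ofr (s ^ ((n:ℝ)-γ-1) * exp (-((1 + ‖y‖ ^ 2) * s))) := by
        refine lintegral_lintegral_swap ?_
        refine Measurable.aemeasurable ?_
        refine Measurable.lintegral_prod_right' (f := fun (p : (E × ℝ) × ℝ) =>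
          ofr (p.1.2 ^ (γ-1) * exp (-(‖x - p.1.1‖ ^ 2 * p.1.2))) *
          ofr (p.2 ^ ((n:ℝ)-γ-1) * exp (-((1 + ‖p.1.1‖ ^ 2) * p.2)))) ?_
        fun_prop
    _ = ∫⁻ t in Ioi (0:ℝ), ∫⁻ s in Ioi (0:ℝ), ∫⁻ y : E,
          ofr (t ^ (γ-1) * exp (-(‖x - y‖ ^ 2 * t))) *
          ofr (s ^ ((n:ℝ)-γ-1) * exp (-((1 + ‖y‖ ^ 2) * s))) := by
        refine lintegral_congr fun t => ?_
        refine lintegral_lintegral_swap ?_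
        fun_prop
    _ = ∫⁻ t in Ioi (0:ℝ), ∫⁻ s in Ioi (0:ℝ),
        ofr (t ^ (γ-1) * s ^ ((n:ℝ)-γ-1) * exp (-s) *
          ((π / (t+s)) ^ ((n:ℝ)/2) * exp (-(t * s / (t+s) * ((1 + ‖x‖ ^ 2)-1))))) := by
        refine setLIntegral_congr_fun measurableSet_Ioi ?_
        intro t ht
        refine setLIntegral_congr_fun measurableSet_Ioi ?_
        intro s hs
        have ht0 : (0:ℝ) < t := ht
        have hs0 : (0:ℝ) < s := hs
        have hpt : ∀ y : E, ofr (t ^ (γ-1) * exp (-(‖x - y‖ ^ 2 * t))) *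
            ofr (s ^ ((n:ℝ)-γ-1) * exp (-((1 + ‖y‖ ^ 2) * s)))
            = ofr (t ^ (γ-1) * s ^ ((n:ℝ)-γ-1) * exp (-s)) *
              ofr (exp (-(t * ‖x - y‖ ^ 2 + s * ‖y‖ ^ 2))) := by
          intro y
          rw [← ENNReal.ofReal_mul (by positivity), ← ENNReal.ofReal_mul (by positivity)]
          congr 1
          rw [show -(‖x - y‖ ^ 2 * t) = -(t * ‖x - y‖ ^ 2) from by ring,
            show -((1 + ‖y‖ ^ 2) * s) = -s + -(s * ‖y‖ ^ 2) from by ring]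
          rw [Real.exp_add,
            show -(t * ‖x - y‖ ^ 2 + s * ‖y‖ ^ 2) = -(t * ‖x - y‖ ^ 2) + -(s * ‖y‖ ^ 2) from by
              ring, Real.exp_add]
          ring
        simp_rw [hpt]
        rw [lintegral_const_mul' _ _ ENNReal.ofReal_ne_top, lintegral_gauss t s ht0 hs0 x]
        rw [← ENNReal.ofReal_mul (by positivity)]
        congr 2
        ring_nf
    _ = ofr (π ^ ((n:ℝ)/2) * Real.Gamma γ * Real.Gamma ((n:ℝ)/2 - γ) * (1 + ‖x‖ ^ 2) ^ (-γ)) :=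
        ts_lemma hγ0 (by exact_mod_cast hγn) hc1
    _ = ofr (Real.Gamma γ * Real.Gamma ((n:ℝ) - γ) * (bubbleI n γ * (1 + ‖x‖ ^ 2) ^ (-γ))) := by
        congr 1
        rw [bubbleI, show ((n:ℝ) - 2 * γ)/2 = (n:ℝ)/2 - γ from by ring]
        field_simp
    _ = ofr (Real.Gamma γ * Real.Gamma ((n:ℝ) - γ)) *
          ofr (bubbleI n γ * (1 + ‖x‖ ^ 2) ^ (-γ)) := by
        rw [← ENNReal.ofReal_mul (by positivity)]

lemma key_integral (hn : 1 ≤ n) {γ : ℝ} (hγ0 : 0 < γ) (hγn : 2 * γ < n) (x : E) :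
    ∫ y : E, (1 + ‖y‖ ^ 2) ^ (-((n:ℝ) - γ)) / ‖x - y‖ ^ (2 * γ)
      = bubbleI n γ * (1 + ‖x‖ ^ 2) ^ (-γ) := by
  have hbI : 0 < bubbleI n γ := by
    have h1 : 0 < Real.Gamma (((n:ℝ) - 2*γ)/2) := Real.Gamma_pos_of_pos (by
      have : (0:ℝ) < (n:ℝ) - 2*γ := by linarith
      linarith)
    have h2 : 0 < Real.Gamma ((n:ℝ) - γ) := Real.Gamma_pos_of_pos (by linarith)
    rw [bubbleI]; positivity
  rw [integral_eq_lintegral_of_nonneg_ae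
    (Filter.Eventually.of_forall fun y => by positivity)
    (Measurable.aestronglyMeasurable (by fun_prop))]
  rw [key_lintegral hn hγ0 hγn x, ENNReal.toReal_ofReal (by positivity)]

end BubbleAux

/-- The bubble solves the critical Schrödinger–Hartree-type integral equation:
`Q(x) = ∫ R_{2s,n}/|x-y|^{n-2s} (∫ Q(z)^{(2n-σ)/(n-2s)}/|y-z|^σ dz) Q(y)^{(n+2s-σ)/(n-2s)} dy`. -/
theorem stmt_9 (n : ℕ) (hn : 1 ≤ n) (s σ : ℝ) (hs0 : 0 < s) (hs : 2 * s < n)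
    (hσ0 : 0 < σ) (hσn : σ < n) (x : EuclideanSpace ℝ (Fin n)) :
    bubbleQ n s σ x =
      ∫ y : EuclideanSpace ℝ (Fin n),
        rieszConst n (2 * s) / ‖x - y‖ ^ ((n : ℝ) - 2 * s) *
        (∫ z : EuclideanSpace ℝ (Fin n),
          bubbleQ n s σ z ^ ((2 * (n : ℝ) - σ) / ((n : ℝ) - 2 * s)) / ‖y - z‖ ^ σ) *
        bubbleQ n s σ y ^ (((n : ℝ) + 2 * s - σ) / ((n : ℝ) - 2 * s)) := by
  have hq0 : (0:ℝ) < n := by linarith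
  have hns : (0:ℝ) < (n:ℝ) - 2 * s := by linarith
  have hnsσ : (0:ℝ) < (n:ℝ) + 2 * s - σ := by linarith
  set q : ℝ := (n:ℝ) with hq
  set R : ℝ := rieszConst n (2 * s) with hR
  set Iσ : ℝ := bubbleI n (σ / 2) with hIσ
  set Iγ : ℝ := bubbleI n ((q - 2 * s) / 2) with hIγdef
  set X : ℝ := R * Iσ * Iγ with hX
  set e₀ : ℝ := (q - 2 * s) / (2 * (q + 2 * s - σ)) with he₀
  set p₁ : ℝ := (2 * q - σ) / (q - 2 * s) with hp₁
  set p₂ : ℝ := (q + 2 * s - σ) / (q - 2 * s) with hp₂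
  set c₀ : ℝ := X ^ (-e₀) with hc₀
  have hRpos : 0 < R := by
    rw [hR, rieszConst]
    have h1 : 0 < Real.Gamma ((q - 2 * s) / 2) := Real.Gamma_pos_of_pos (by linarith)
    have h2 : 0 < Real.Gamma (2 * s / 2) := Real.Gamma_pos_of_pos (by linarith)
    positivity
  have hIσpos : 0 < Iσ := by
    rw [hIσ, bubbleI]
    have h1 : 0 < Real.Gamma ((q - 2 * (σ / 2)) / 2) := Real.Gamma_pos_of_pos (by
      have : q - 2 * (σ / 2) = q - σ := by ring
      rw [this]; linarith)
    have h2 : 0 < Real.Gamma (q - σ / 2) := Real.Gamma_pos_of_pos (by linarith)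
    positivity
  have hIγpos : 0 < Iγ := by
    rw [hIγdef, bubbleI]
    have h1 : 0 < Real.Gamma ((q - 2 * ((q - 2 * s) / 2)) / 2) := Real.Gamma_pos_of_pos (by
      have : (q - 2 * ((q - 2 * s) / 2)) / 2 = s := by ring
      rw [this]; linarith)
    have h2 : 0 < Real.Gamma (q - (q - 2 * s) / 2) := Real.Gamma_pos_of_pos (by linarith)
    positivity
  have hXpos : 0 < X := by rw [hX]; positivity
  have hc₀pos : 0 < c₀ := Real.rpow_pos_of_pos hXpos _
  -- the bubble in convenient form
  have hQ : ∀ z : EuclideanSpace ℝ (Fin n), bubbleQ n s σ z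
      = c₀ * (1 / (1 + ‖z‖ ^ 2)) ^ ((q - 2 * s) / 2) := fun z => rfl
  have hQpow : ∀ (z : EuclideanSpace ℝ (Fin n)) (p : ℝ), bubbleQ n s σ z ^ p
      = c₀ ^ p * (1 + ‖z‖ ^ 2) ^ (-((q - 2 * s) / 2 * p)) := by
    intro z p
    have hb : (0:ℝ) < 1 + ‖z‖ ^ 2 := by nlinarith [sq_nonneg ‖z‖]
    rw [hQ z, Real.mul_rpow hc₀pos.le (by positivity)]
    congr 1
    rw [← Real.rpow_mul (by positivity : (0:ℝ) ≤ 1 / (1 + ‖z‖ ^ 2)), one_div,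
      Real.inv_rpow hb.le, ← Real.rpow_neg hb.le]
  have hinner : ∀ y : EuclideanSpace ℝ (Fin n), (∫ z : EuclideanSpace ℝ (Fin n),
      bubbleQ n s σ z ^ p₁ / ‖y - z‖ ^ σ)
      = c₀ ^ p₁ * Iσ * (1 + ‖y‖ ^ 2) ^ (-(σ/2)) := by
    intro y
    have hpt : ∀ z : EuclideanSpace ℝ (Fin n), bubbleQ n s σ z ^ p₁ / ‖y - z‖ ^ σ
        = c₀ ^ p₁ * ((1 + ‖z‖ ^ 2) ^ (-(q - σ/2)) / ‖y - z‖ ^ (2 * (σ/2))) := by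
      intro z
      rw [hQpow z p₁, show (2:ℝ) * (σ/2) = σ from by ring,
        show (q - 2*s)/2 * p₁ = q - σ/2 from by rw [hp₁]; field_simp,
        mul_div_assoc]
    simp_rw [hpt]
    rw [integral_const_mul, key_integral hn (by linarith : 0 < σ/2)
      (by push_cast; linarith : 2 * (σ/2) < (n:ℕ)) y, ← hIσ]
    ring
  have hb' : ∀ y : EuclideanSpace ℝ (Fin n), (0:ℝ) < 1 + ‖y‖ ^ 2 := fun y => by
    nlinarith [sq_nonneg ‖y‖]
  have houter : ∀ y : EuclideanSpace ℝ (Fin n),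
      R / ‖x - y‖ ^ (q - 2 * s) * (∫ z : EuclideanSpace ℝ (Fin n),
        bubbleQ n s σ z ^ p₁ / ‖y - z‖ ^ σ) * bubbleQ n s σ y ^ p₂
      = (R * c₀ ^ p₁ * Iσ * c₀ ^ p₂) *
        ((1 + ‖y‖ ^ 2) ^ (-(q - (q - 2*s)/2)) / ‖x - y‖ ^ (2 * ((q - 2*s)/2))) := by
    intro y
    rw [hinner y, hQpow y p₂,
      show (q - 2*s)/2 * p₂ = (q + 2*s - σ)/2 from by rw [hp₂]; field_simp,
      show (2:ℝ) * ((q - 2*s)/2) = q - 2*s from by ring]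
    have hcomb : (1 + ‖y‖ ^ 2) ^ (-(σ/2)) * (1 + ‖y‖ ^ 2) ^ (-((q + 2*s - σ)/2))
        = (1 + ‖y‖ ^ 2) ^ (-(q - (q - 2*s)/2)) := by
      rw [← Real.rpow_add (hb' y)]; congr 1; ring
    calc R / ‖x - y‖ ^ (q - 2*s) * (c₀ ^ p₁ * Iσ * (1 + ‖y‖ ^ 2) ^ (-(σ/2))) *
          (c₀ ^ p₂ * (1 + ‖y‖ ^ 2) ^ (-((q + 2*s - σ)/2)))
        = (R * c₀ ^ p₁ * Iσ * c₀ ^ p₂) * (((1 + ‖y‖ ^ 2) ^ (-(σ/2)) *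
            (1 + ‖y‖ ^ 2) ^ (-((q + 2*s - σ)/2))) * (‖x - y‖ ^ (q - 2*s))⁻¹) := by
          rw [div_eq_mul_inv]; ring
      _ = (R * c₀ ^ p₁ * Iσ * c₀ ^ p₂) *
          ((1 + ‖y‖ ^ 2) ^ (-(q - (q - 2*s)/2)) / ‖x - y‖ ^ (q - 2*s)) := by
          rw [hcomb, ← div_eq_mul_inv]
  rw [integral_congr_ae (Filter.Eventually.of_forall houter), integral_const_mul,
    key_integral hn (by linarith : 0 < (q - 2*s)/2)
      (by push_cast; linarith : 2 * ((q - 2*s)/2) < (n:ℕ)) x, ← hIγdef]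
  rw [hQ x, one_div, Real.inv_rpow (hb' x).le, ← Real.rpow_neg (hb' x).le]
  have hkey : R * Iσ * Iγ * (c₀ ^ p₁ * c₀ ^ p₂) = c₀ := by
    rw [hc₀, ← Real.rpow_mul hXpos.le, ← Real.rpow_mul hXpos.le, ← Real.rpow_add hXpos, ← hX]
    rw [show X * X ^ (-e₀ * p₁ + -e₀ * p₂) = X ^ (1:ℝ) * X ^ (-e₀ * p₁ + -e₀ * p₂) from by
      rw [Real.rpow_one], ← Real.rpow_add hXpos]
    congr 1
    rw [he₀, hp₁, hp₂]
    field_simp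
    ring
  calc c₀ * (1 + ‖x‖ ^ 2) ^ (-((q - 2 * s) / 2))
      = R * Iσ * Iγ * (c₀ ^ p₁ * c₀ ^ p₂) * (1 + ‖x‖ ^ 2) ^ (-((q - 2 * s) / 2)) := by
        rw [hkey]
    _ = R * c₀ ^ p₁ * Iσ * c₀ ^ p₂ * (Iγ * (1 + ‖x‖ ^ 2) ^ (-((q - 2 * s) / 2))) := by ring
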